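/- Let R be an invertible operator on V⊗V satisfying the braid/Yang–Baxter equation R₁₂R₂₃R₁₂ = R₂₃R₁₂R₂₃ on V⊗V⊗V and the Hecke equation (R−q)(R−1)=0 with q(q−1)(q²−q+1) ≠ 0. Then the kernel of P_q := (R₁₂−q)(R₂₃R₁₂−qR₂₃+q²) equals Im(R₁₂−1) + Im(R₂₃−1). -/
import Mathlib


open TensorProduct

variable {k : Type*} [Field k] {V : Type*} [AddCommGroup V] [Module k V]

/-- The operator `R ⊗ id` acting on `V ⊗ V ⊗ V` (associated as `V ⊗ (V ⊗ V)`). -/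
noncomputable def R₁₂ (R : Module.End k (V ⊗[k] V)) :
    Module.End k (V ⊗[k] (V ⊗[k] V)) :=
  (TensorProduct.assoc k V V V).toLinearMap ∘ₗ
    TensorProduct.map R LinearMap.id ∘ₗ (TensorProduct.assoc k V V V).symm.toLinearMap

/-- The operator `id ⊗ R` acting on `V ⊗ V ⊗ V`. -/
noncomputable def R₂₃ (R : Module.End k (V ⊗[k] V)) :
    Module.End k (V ⊗[k] (V ⊗[k] V)) :=
  TensorProduct.map LinearMap.id R

section HeckeAux

variable {E : Type*} [Ring E] [Algebra k E]

/-- `P` annihilates the image of `A - 1` (uses only the Hecke relation for `A`). -/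
lemma hecke_L1 (A B : E) (q : k) (hA : (A - q • 1) * (A - 1) = 0) :
    (A - q • 1) * (B * A - q • B + q ^ 2 • 1) * (A - 1) = 0 := by
  have h : (A - q • 1) * (B * A - q • B + q ^ 2 • 1) * (A - 1)
      = ((A - q • 1) * B) * ((A - q • 1) * (A - 1)) + q ^ 2 • ((A - q • 1) * (A - 1)) := by
    simp only [mul_add, add_mul, mul_sub, sub_mul, smul_mul_assoc, mul_smul_comm, mul_assoc,
      one_mul, mul_one]
    module
  rw [h, hA]
  simp

/-- `P` annihilates the image of `B - 1` (uses Hecke relations and the braid relation). -/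
lemma hecke_L2 (A B : E) (q : k) (hA : (A - q • 1) * (A - 1) = 0)
    (hB : (B - q • 1) * (B - 1) = 0) (hbraid : A * B * A = B * A * B) :
    (A - q • 1) * (B * A - q • B + q ^ 2 • 1) * (B - 1) = 0 := by
  have h : (A - q • 1) * (B * A - q • B + q ^ 2 • 1) * (B - 1)
      = ((A - q • 1) * (A - 1)) * (B * A) + (A - q • 1) * (B * A * B - A * B * A)
        - q • ((A - q • 1) * ((B - q • 1) * (B - 1))) := by
    simp only [mul_add, add_mul, mul_sub, sub_mul, smul_mul_assoc, mul_smul_comm, mul_assoc,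
      one_mul, mul_one]
    module
  rw [h, hA, hB, hbraid]
  simp

/-- The key identity (valid in any algebra, no relations needed). -/
lemma hecke_L3 (A B : E) (q : k) :
    (A - 1) * ((q - 1 - q ^ 2) • 1 + q • B - B * A) + (B - 1) * ((q - q ^ 2) • 1 + (q - 1) • A)
      = ((1 - q) * (q ^ 2 - q + 1)) • (1 : E) - (A - q • 1) * (B * A - q • B + q ^ 2 • 1) := by
  simp only [mul_add, add_mul, mul_sub, sub_mul, smul_mul_assoc, mul_smul_comm, mul_assoc,
    one_mul, mul_one]
  module

end HeckeAux

theorem stmt_1 (R : Module.End k (V ⊗[k] V)) (q : k) [FiniteDimensional k V]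
    (hR : IsUnit R)
    (hbraid : R₁₂ R * R₂₃ R * R₁₂ R = R₂₃ R * R₁₂ R * R₂₃ R)
    (hHecke : (R - q • 1) * (R - 1) = 0)
    (hq : q * (q - 1) * (q ^ 2 - q + 1) ≠ 0) :
    LinearMap.ker ((R₁₂ R - q • 1) * (R₂₃ R * R₁₂ R - q • R₂₃ R + q ^ 2 • 1)) =
      LinearMap.range (R₁₂ R - 1) ⊔ LinearMap.range (R₂₃ R - 1) := by
  classical
  -- R₁₂ as conjugation of rTensor
  have hΦ : ∀ f : Module.End k (V ⊗[k] V),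
      R₁₂ (k := k) (V := V) f = (TensorProduct.assoc k V V V).conj (f.rTensor V) := by
    intro f
    simp only [R₁₂, LinearEquiv.conj_apply, LinearMap.rTensor, LinearMap.comp_assoc]
  -- Hecke relation for R₁₂ R
  have hA : (R₁₂ R - q • 1) * (R₁₂ R - 1) = 0 := by
    have key : R₁₂ (k := k) (V := V) ((R - q • 1) * (R - 1))
        = (R₁₂ R - q • 1) * (R₁₂ R - 1) := by
      rw [hΦ, hΦ, LinearMap.rTensor_mul, LinearMap.rTensor_sub, LinearMap.rTensor_sub,
        LinearMap.rTensor_smul]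
      have h1 : ((1 : Module.End k (V ⊗[k] V)).rTensor V)
          = (1 : Module.End k ((V ⊗[k] V) ⊗[k] V)) := LinearMap.rTensor_id V _
      rw [h1]
      simp only [LinearEquiv.conj_apply, Module.End.mul_eq_comp]
      ext x
      simp [LinearMap.sub_apply, LinearMap.smul_apply, map_sub, map_smul]
    rw [← key, hHecke, hΦ]
    simp
  -- Hecke relation for R₂₃ R
  have hB : (R₂₃ R - q • 1) * (R₂₃ R - 1) = 0 := by
    have hΨ : ∀ f : Module.End k (V ⊗[k] V),
        R₂₃ (k := k) (V := V) f = f.lTensor V := fun _ => rfl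
    have key : R₂₃ (k := k) (V := V) ((R - q • 1) * (R - 1))
        = (R₂₃ R - q • 1) * (R₂₃ R - 1) := by
      simp only [hΨ]
      rw [LinearMap.lTensor_mul, LinearMap.lTensor_sub, LinearMap.lTensor_sub,
        LinearMap.lTensor_smul]
      have h1 : ((1 : Module.End k (V ⊗[k] V)).lTensor V)
          = (1 : Module.End k (V ⊗[k] (V ⊗[k] V))) := LinearMap.lTensor_id V _
      rw [h1]
    rw [← key, hHecke, hΨ]
    simp [LinearMap.lTensor]
  have L1 := hecke_L1 (R₁₂ R) (R₂₃ R) q hA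
  have L2 := hecke_L2 (R₁₂ R) (R₂₃ R) q hA hB hbraid
  have L3 := hecke_L3 (k := k) (R₁₂ R) (R₂₃ R) q
  have hμ : (1 - q) * (q ^ 2 - q + 1) ≠ 0 := by
    intro h
    apply hq
    rw [show q * (q - 1) * (q ^ 2 - q + 1) = -((1 - q) * (q ^ 2 - q + 1) * q) by ring, h]
    ring
  apply le_antisymm
  · intro x hx
    have hx0 : ((R₁₂ R - q • 1) * (R₂₃ R * R₁₂ R - q • R₂₃ R + q ^ 2 • 1)) x = 0 := hx
    have key : ((1 - q) * (q ^ 2 - q + 1)) • x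
        = (R₁₂ R - 1) ((q - 1 - q ^ 2) • x + q • (R₂₃ R) x - (R₂₃ R) ((R₁₂ R) x))
          + (R₂₃ R - 1) ((q - q ^ 2) • x + (q - 1) • (R₁₂ R) x) := by
      have h := congrArg
        (fun f : Module.End k (V ⊗[k] (V ⊗[k] V)) => f x) L3
      simp only [LinearMap.add_apply, LinearMap.sub_apply, LinearMap.smul_apply,
        Module.End.mul_apply, Module.End.one_apply, hx0, sub_zero] at h
      simp only [LinearMap.sub_apply, Module.End.one_apply]
      exact h.symm
    have hmem : ((1 - q) * (q ^ 2 - q + 1)) • x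
        ∈ LinearMap.range (R₁₂ R - 1) ⊔ LinearMap.range (R₂₃ R - 1) := by
      rw [key]
      exact Submodule.add_mem _ (Submodule.mem_sup_left ⟨_, rfl⟩)
        (Submodule.mem_sup_right ⟨_, rfl⟩)
    have h2 := Submodule.smul_mem
      (LinearMap.range (R₁₂ R - 1) ⊔ LinearMap.range (R₂₃ R - 1))
      (((1 - q) * (q ^ 2 - q + 1))⁻¹) hmem
    rwa [inv_smul_smul₀ hμ] at h2
  · apply sup_le
    · rw [LinearMap.range_le_ker_iff]
      exact L1
    · rw [LinearMap.range_le_ker_iff]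
      exact L2
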